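/- Let p₁, p₂, p₃ be distinct odd primes and n₁, n₂, n₃ positive integers, and set n = p₁^{n₁}·p₂^{n₂}·p₃^{n₃}. Then the unit graph G(Z_n) is connected and its diameter is at most 2; that is, any two distinct vertices of G(Z_n) are joined by a path of length at most 2. -/

import Mathlib

/-- The unit graph of `ZMod m`: distinct vertices `x, y` are adjacent iff `x + y` is a unit. -/
def unitGraph (m : ℕ) : SimpleGraph (ZMod m) where
  Adj x y := x ≠ y ∧ IsUnit (x + y)
  symm := by
    constructor
    intro x y h
    exact ⟨h.1.symm, by rw [add_comm]; exact h.2⟩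
  loopless := by
    constructor
    intro x h
    exact h.1 rfl

lemma isUnit_prod_of {R S : Type*} [CommRing R] [CommRing S] {a : R} {b : S}
    (ha : IsUnit a) (hb : IsUnit b) : IsUnit ((a, b) : R × S) := by
  obtain ⟨u, rfl⟩ := ha
  obtain ⟨v, rfl⟩ := hb
  exact ⟨⟨(u.val, v.val), (u.inv, v.inv),
    Prod.ext u.val_inv v.val_inv, Prod.ext u.inv_val v.inv_val⟩, rfl⟩

lemma exists_add_unit_prime_pow (p k : ℕ) (hp : p.Prime) (hodd : Odd p) (hk : 0 < k)
    (x y : ZMod (p ^ k)) : ∃ z, IsUnit (x + z) ∧ IsUnit (y + z) := by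
  haveI : Fact p.Prime := ⟨hp⟩
  haveI : NeZero (p ^ k) := ⟨pow_ne_zero k hp.pos.ne'⟩
  have hdvd : p ∣ p ^ k := dvd_pow_self p hk.ne'
  set f : ZMod (p ^ k) →+* ZMod p := ZMod.castHom hdvd (ZMod p) with hf
  have hp3 : 3 ≤ p := by
    have h1 := hp.two_le
    have h2 := Nat.odd_iff.mp hodd
    omega
  -- key: IsUnit a ↔ f a ≠ 0
  have key : ∀ a : ZMod (p ^ k), IsUnit a ↔ f a ≠ 0 := by
    intro a
    have h1 : f a = ((a.val : ℕ) : ZMod p) := by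
      rw [hf, ZMod.castHom_apply, ← ZMod.natCast_val]
    rw [h1, Ne, ZMod.natCast_eq_zero_iff]
    conv_lhs => rw [← ZMod.natCast_zmod_val a]
    rw [ZMod.isUnit_iff_coprime, Nat.coprime_pow_right_iff hk,
      Nat.coprime_comm, hp.coprime_iff_not_dvd]
  -- pick c : ZMod p with c ≠ -(f x) and c ≠ -(f y)
  obtain ⟨c, hc1, hc2⟩ : ∃ c : ZMod p, c ≠ -(f x) ∧ c ≠ -(f y) := by
    by_contra h
    push_neg at h
    have hsub : (Finset.univ : Finset (ZMod p)) ⊆ {-(f x), -(f y)} := by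
      intro c _
      simp only [Finset.mem_insert, Finset.mem_singleton]
      by_cases h1 : c = -(f x)
      · exact Or.inl h1
      · exact Or.inr (h c h1)
    have := Finset.card_le_card hsub
    rw [Finset.card_univ, ZMod.card] at this
    have h2 : ({-(f x), -(f y)} : Finset (ZMod p)).card ≤ 2 :=
      (Finset.card_insert_le _ _).trans (by simp)
    omega
  refine ⟨(c.val : ZMod (p ^ k)), ?_, ?_⟩
  · rw [key]
    have : f ((c.val : ZMod (p ^ k))) = c := by
      rw [map_natCast, ZMod.natCast_zmod_val]
    rw [map_add, this]
    intro h
    exact hc1 (by linear_combination h)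
  · rw [key]
    have : f ((c.val : ZMod (p ^ k))) = c := by
      rw [map_natCast, ZMod.natCast_zmod_val]
    rw [map_add, this]
    intro h
    exact hc2 (by linear_combination h)

lemma exists_add_unit_prod {R S : Type*} [CommRing R] [CommRing S]
    (hR : ∀ x y : R, ∃ z, IsUnit (x + z) ∧ IsUnit (y + z))
    (hS : ∀ x y : S, ∃ z, IsUnit (x + z) ∧ IsUnit (y + z)) :
    ∀ x y : R × S, ∃ z, IsUnit (x + z) ∧ IsUnit (y + z) := by
  intro x y
  obtain ⟨z1, h1, h2⟩ := hR x.1 y.1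
  obtain ⟨z2, g1, g2⟩ := hS x.2 y.2
  exact ⟨(z1, z2), isUnit_prod_of h1 g1, isUnit_prod_of h2 g2⟩

lemma exists_add_unit_equiv {R S : Type*} [CommRing R] [CommRing S] (e : R ≃+* S)
    (hR : ∀ x y : R, ∃ z, IsUnit (x + z) ∧ IsUnit (y + z)) :
    ∀ x y : S, ∃ z, IsUnit (x + z) ∧ IsUnit (y + z) := by
  intro x y
  obtain ⟨z, h1, h2⟩ := hR (e.symm x) (e.symm y)
  refine ⟨e z, ?_, ?_⟩
  · have := h1.map e.toRingHom
    simpa using this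
  · have := h2.map e.toRingHom
    simpa using this

theorem unitGraph_threeOddPrimes_connected_diam (p₁ p₂ p₃ n₁ n₂ n₃ : ℕ)
    (hp₁ : p₁.Prime) (hp₂ : p₂.Prime) (hp₃ : p₃.Prime)
    (hodd₁ : Odd p₁) (hodd₂ : Odd p₂) (hodd₃ : Odd p₃)
    (hne₁₂ : p₁ ≠ p₂) (hne₁₃ : p₁ ≠ p₃) (hne₂₃ : p₂ ≠ p₃)
    (hn₁ : 0 < n₁) (hn₂ : 0 < n₂) (hn₃ : 0 < n₃) :
    (unitGraph (p₁ ^ n₁ * p₂ ^ n₂ * p₃ ^ n₃)).Connected ∧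
    ∀ x y : ZMod (p₁ ^ n₁ * p₂ ^ n₂ * p₃ ^ n₃), x ≠ y →
      (unitGraph (p₁ ^ n₁ * p₂ ^ n₂ * p₃ ^ n₃)).dist x y ≤ 2 := by
  set m := p₁ ^ n₁ * p₂ ^ n₂ * p₃ ^ n₃ with hm
  have c12 : Nat.Coprime (p₁ ^ n₁) (p₂ ^ n₂) :=
    ((Nat.coprime_primes hp₁ hp₂).2 hne₁₂).pow n₁ n₂
  have c13 : Nat.Coprime (p₁ ^ n₁) (p₃ ^ n₃) :=
    ((Nat.coprime_primes hp₁ hp₃).2 hne₁₃).pow n₁ n₃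
  have c23 : Nat.Coprime (p₂ ^ n₂) (p₃ ^ n₃) :=
    ((Nat.coprime_primes hp₂ hp₃).2 hne₂₃).pow n₂ n₃
  have e2 := ZMod.chineseRemainder c12
  have e1 := ZMod.chineseRemainder (c13.mul c23)
  have hpp : ∀ (p k : ℕ), p.Prime → Odd p → 0 < k →
      ∀ x y : ZMod (p ^ k), ∃ z, IsUnit (x + z) ∧ IsUnit (y + z) :=
    fun p k a b c => exists_add_unit_prime_pow p k a b c
  have key : ∀ x y : ZMod m, ∃ z, IsUnit (x + z) ∧ IsUnit (y + z) := by
    have h12 : ∀ x y : ZMod (p₁ ^ n₁ * p₂ ^ n₂), ∃ z, IsUnit (x + z) ∧ IsUnit (y + z) :=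
      exists_add_unit_equiv e2.symm
        (exists_add_unit_prod (hpp p₁ n₁ hp₁ hodd₁ hn₁) (hpp p₂ n₂ hp₂ hodd₂ hn₂))
    exact exists_add_unit_equiv e1.symm
      (exists_add_unit_prod h12 (hpp p₃ n₃ hp₃ hodd₃ hn₃))
  haveI : NeZero m := ⟨by
    rw [hm]
    exact Nat.mul_ne_zero (Nat.mul_ne_zero (pow_ne_zero _ hp₁.pos.ne') (pow_ne_zero _ hp₂.pos.ne')) (pow_ne_zero _ hp₃.pos.ne')⟩
  have main : ∀ x y : ZMod m, x ≠ y → ∃ w : (unitGraph m).Walk x y, w.length ≤ 2 := by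
    intro x y hxy
    by_cases hadj : (unitGraph m).Adj x y
    · exact ⟨hadj.toWalk, by simp⟩
    · obtain ⟨z, hxz, hyz⟩ := key x y
      have hzx : x ≠ z := by
        rintro rfl
        exact hadj ⟨hxy, by rwa [add_comm] at hyz⟩
      have hzy : z ≠ y := by
        rintro rfl
        exact hadj ⟨hxy, hxz⟩
      have a1 : (unitGraph m).Adj x z := ⟨hzx, hxz⟩
      have a2 : (unitGraph m).Adj z y := ⟨hzy, by rwa [add_comm]⟩
      exact ⟨SimpleGraph.Walk.cons a1 a2.toWalk, by simp⟩
  constructor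
  · apply SimpleGraph.Connected.mk
    intro x y
    rcases eq_or_ne x y with rfl | hxy
    · exact SimpleGraph.Reachable.refl x
    · obtain ⟨w, _⟩ := main x y hxy
      exact ⟨w⟩
  · intro x y hxy
    obtain ⟨w, hw⟩ := main x y hxy
    exact (SimpleGraph.dist_le w).trans hw
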